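/- Define for r, s > 0 with A := r + s - √s·√(r+s) and r + s ≤ 1: t*(r,s) = √(r(1-r-s)) if 2(r+s)(r+s+√s·√(r+s)) ≤ r, and t*(r,s) = √(2A) - A otherwise. If A < 1/2, then t*(r,s) > A. -/
import Mathlib


noncomputable def tstar (r s : ℝ) : ℝ :=
  if 2 * (r + s) * (r + s + Real.sqrt s * Real.sqrt (r + s)) ≤ r then
    Real.sqrt (r * (1 - r - s))
  else
    Real.sqrt (2 * (r + s - Real.sqrt s * Real.sqrt (r + s)))
      - (r + s - Real.sqrt s * Real.sqrt (r + s))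

theorem tstar_gt_A (r s : ℝ) (hr : 0 < r) (hs : 0 < s) (hrs : r + s ≤ 1)
    (hA : r + s - Real.sqrt s * Real.sqrt (r + s) < 1 / 2) :
    tstar r s > r + s - Real.sqrt s * Real.sqrt (r + s) := by
  set A := r + s - Real.sqrt s * Real.sqrt (r + s) with hAdef
  have hrs0 : (0:ℝ) < r + s := by linarith
  have hsq : Real.sqrt s < Real.sqrt (r + s) :=
    Real.sqrt_lt_sqrt hs.le (by linarith)
  have hsqrs : Real.sqrt (r + s) * Real.sqrt (r + s) = r + s :=
    Real.mul_self_sqrt hrs0.le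
  have hsqpos : 0 < Real.sqrt (r + s) := Real.sqrt_pos.mpr hrs0
  have hApos : 0 < A := by
    have : Real.sqrt s * Real.sqrt (r + s) < Real.sqrt (r + s) * Real.sqrt (r + s) :=
      mul_lt_mul_of_pos_right hsq hsqpos
    rw [hsqrs] at this
    simp only [hAdef]; linarith
  have hAler : A ≤ r := by
    have hss : Real.sqrt s * Real.sqrt s = s := Real.mul_self_sqrt hs.le
    have hsle : Real.sqrt s ≤ Real.sqrt (r + s) := hsq.le
    have hspos : 0 < Real.sqrt s := Real.sqrt_pos.mpr hs
    nlinarith [mul_le_mul_of_nonneg_left hsle hspos.le]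
  unfold tstar
  split_ifs with h
  · -- first branch
    have hBnn : 0 ≤ Real.sqrt s * Real.sqrt (r + s) := by positivity
    have hrs_half : r + s < 1 / 2 := by nlinarith
    have hr_half : r < 1 / 2 := by linarith
    have h1 : Real.sqrt (r / 2) ≤ Real.sqrt (r * (1 - r - s)) := by
      apply Real.sqrt_le_sqrt; nlinarith
    have h2 : r < Real.sqrt (r / 2) := by
      rw [show r < Real.sqrt (r/2) ↔ r^2 < r/2 from Real.lt_sqrt hr.le]
      nlinarith
    linarith
  · -- second branch: √(2A) - A > A, i.e. √(2A) > 2A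
    have h2A : 2 * A < 1 := by linarith
    have h2 : 2 * A < Real.sqrt (2 * A) := by
      rw [show 2 * A < Real.sqrt (2*A) ↔ (2*A)^2 < 2*A from
        Real.lt_sqrt (by linarith)]
      nlinarith
    linarith
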